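/- Let χ(μ) = Ψ_λ(ρ_κ(ζ)) where μ = (κ, λ), λ = (C, d) ranges over {λ : ‖λ‖ < D} and Ψ_λ(x) = ψ(Cx + d). Assume κ ↦ ρ_κ(ζ) is Lipschitz with constant L₁, κ ↦ ∇ρ_κ(ζ) is Lipschitz with constant L₂, ‖ρ_κ(ζ)‖ ≤ B₁ and ‖∇ρ_κ(ζ)‖ ≤ B₂ for all κ. Then the partial gradient of χ with respect to κ, given by (∂/∂κ)χ(μ) = Ψ′_λ(ρ_κ(ζ))·∇ρ_κ(ζ), is Lipschitz in μ with constant √m₂, where m₂ = (n₃c₁DL₂ + B₂c₂D²L₁)² + B₂²(n₃c₁ + Dc₂(B₁² + 1)^{1/2})². -/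

import Mathlib

open scoped BigOperators

/-- Frobenius-type norm of a vector. -/
noncomputable def vnorm {n : ℕ} (v : Fin n → ℝ) : ℝ := Real.sqrt (∑ i, (v i) ^ 2)

/-- Frobenius-type norm of a matrix. -/
noncomputable def mnorm {m n : ℕ} (A : Fin m → Fin n → ℝ) : ℝ :=
  Real.sqrt (∑ i, ∑ j, (A i j) ^ 2)

/-- The κ-partial gradient of χ: (∂/∂κ)χ(μ) = Ψ′_λ(ρ_κ(ζ))·∇ρ_κ(ζ), where
Ψ′_λ(x) = diag(ψ′(Cx + d))·C and `J κ` is the Jacobian ∇ρ_κ(ζ) ∈ ℝ^{n₂×l₁}. -/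
noncomputable def gradChiKappa {n₁ n₂ n₃ l₁ : ℕ} (ψ : ℝ → ℝ)
    (ρ : (Fin l₁ → ℝ) → (Fin n₁ → ℝ) → Fin n₂ → ℝ)
    (J : (Fin l₁ → ℝ) → Fin n₂ → Fin l₁ → ℝ) (ζ : Fin n₁ → ℝ)
    (κ : Fin l₁ → ℝ) (C : Fin n₃ → Fin n₂ → ℝ) (d : Fin n₃ → ℝ) :
    Fin n₃ → Fin l₁ → ℝ :=
  fun k a => ∑ j, (deriv ψ (∑ j', C k j' * ρ κ ζ j' + d k) * C k j) * J κ j a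

section AuxLemmas
open Finset
variable {ι : Type*} [Fintype ι]

lemma my_sum_sq_nonneg (f : ι → ℝ) : 0 ≤ ∑ i, f i ^ 2 :=
  Finset.sum_nonneg fun _ _ => sq_nonneg _

lemma my_cs_sum (f g : ι → ℝ) :
    ∑ i, f i * g i ≤ Real.sqrt (∑ i, f i ^ 2) * Real.sqrt (∑ i, g i ^ 2) := by
  have h := sum_mul_sq_le_sq_mul_sq Finset.univ f g
  calc ∑ i, f i * g i ≤ |∑ i, f i * g i| := le_abs_self _
    _ = Real.sqrt ((∑ i, f i * g i) ^ 2) := (Real.sqrt_sq_eq_abs _).symm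
    _ ≤ Real.sqrt ((∑ i, f i ^ 2) * ∑ i, g i ^ 2) := Real.sqrt_le_sqrt h
    _ = _ := Real.sqrt_mul (my_sum_sq_nonneg f) _

lemma my_sqrt_tri (f g : ι → ℝ) :
    Real.sqrt (∑ i, (f i + g i) ^ 2) ≤
      Real.sqrt (∑ i, f i ^ 2) + Real.sqrt (∑ i, g i ^ 2) := by
  have hf := my_sum_sq_nonneg f
  have hg := my_sum_sq_nonneg g
  have hfg := my_cs_sum f g
  have h1 : Real.sqrt (∑ i, f i ^ 2) ^ 2 = ∑ i, f i ^ 2 := Real.sq_sqrt hf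
  have h2 : Real.sqrt (∑ i, g i ^ 2) ^ 2 = ∑ i, g i ^ 2 := Real.sq_sqrt hg
  have expand : ∑ i, (f i + g i) ^ 2
      = (∑ i, f i ^ 2) + 2 * (∑ i, f i * g i) + (∑ i, g i ^ 2) := by
    rw [Finset.mul_sum, ← Finset.sum_add_distrib, ← Finset.sum_add_distrib]
    exact Finset.sum_congr rfl fun i _ => by ring
  have key : ∑ i, (f i + g i) ^ 2
      ≤ (Real.sqrt (∑ i, f i ^ 2) + Real.sqrt (∑ i, g i ^ 2)) ^ 2 := by
    nlinarith [Real.sqrt_nonneg (∑ i, f i ^ 2), Real.sqrt_nonneg (∑ i, g i ^ 2)]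
  calc Real.sqrt (∑ i, (f i + g i) ^ 2)
      ≤ Real.sqrt ((Real.sqrt (∑ i, f i ^ 2) + Real.sqrt (∑ i, g i ^ 2)) ^ 2) :=
        Real.sqrt_le_sqrt key
    _ = _ := Real.sqrt_sq (by positivity)

lemma my_two_cs (a b x y : ℝ) :
    a * x + b * y ≤ Real.sqrt (a ^ 2 + b ^ 2) * Real.sqrt (x ^ 2 + y ^ 2) := by
  have h : (a * x + b * y) ^ 2 ≤ (a ^ 2 + b ^ 2) * (x ^ 2 + y ^ 2) := by
    nlinarith [sq_nonneg (a * y - b * x)]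
  calc a * x + b * y ≤ |a * x + b * y| := le_abs_self _
    _ = Real.sqrt ((a * x + b * y) ^ 2) := (Real.sqrt_sq_eq_abs _).symm
    _ ≤ Real.sqrt ((a ^ 2 + b ^ 2) * (x ^ 2 + y ^ 2)) := Real.sqrt_le_sqrt h
    _ = _ := Real.sqrt_mul (by positivity) _

lemma my_sq_le_of_abs {a b : ℝ} (h : |a| ≤ b) : a ^ 2 ≤ b ^ 2 := by
  rw [← sq_abs]; exact pow_le_pow_left₀ (abs_nonneg a) h 2

end AuxLemmas

section MatLemmas
open Finset
variable {m n l : ℕ}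

lemma vnorm_nonneg (v : Fin n → ℝ) : 0 ≤ vnorm v := Real.sqrt_nonneg _
lemma mnorm_nonneg (A : Fin m → Fin n → ℝ) : 0 ≤ mnorm A := Real.sqrt_nonneg _

lemma sq_vnorm (v : Fin n → ℝ) : (vnorm v) ^ 2 = ∑ i, (v i) ^ 2 :=
  Real.sq_sqrt (my_sum_sq_nonneg v)

lemma sq_mnorm (A : Fin m → Fin n → ℝ) : (mnorm A) ^ 2 = ∑ i, ∑ j, (A i j) ^ 2 :=
  Real.sq_sqrt (Finset.sum_nonneg fun _ _ => my_sum_sq_nonneg _)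

lemma mnorm_add_le (f g : Fin m → Fin n → ℝ) :
    mnorm (fun k a => f k a + g k a) ≤ mnorm f + mnorm g := by
  unfold mnorm
  have e : ∀ h : Fin m → Fin n → ℝ,
      ∑ i, ∑ j, (h i j) ^ 2 = ∑ p : Fin m × Fin n, (h p.1 p.2) ^ 2 := fun h =>
    (Fintype.sum_prod_type (f := fun p : Fin m × Fin n => (h p.1 p.2) ^ 2)).symm
  rw [e, e, e]
  exact my_sqrt_tri (fun p : Fin m × Fin n => f p.1 p.2) (fun p => g p.1 p.2)

lemma frob_mul_le (M : Fin m → Fin n → ℝ) (N : Fin n → Fin l → ℝ) :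
    ∑ k, ∑ a, (∑ j, M k j * N j a) ^ 2
      ≤ (∑ k, ∑ j, (M k j) ^ 2) * (∑ j, ∑ a, (N j a) ^ 2) := by
  have step : ∀ k, ∑ a, (∑ j, M k j * N j a) ^ 2
      ≤ (∑ j, (M k j) ^ 2) * (∑ j, ∑ a, (N j a) ^ 2) := by
    intro k
    calc ∑ a, (∑ j, M k j * N j a) ^ 2
        ≤ ∑ a, (∑ j, (M k j) ^ 2) * (∑ j, (N j a) ^ 2) :=
          Finset.sum_le_sum fun a _ => sum_mul_sq_le_sq_mul_sq univ _ _
      _ = (∑ j, (M k j) ^ 2) * ∑ a, ∑ j, (N j a) ^ 2 := by rw [← Finset.mul_sum]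
      _ = _ := by rw [Finset.sum_comm]
  calc ∑ k, ∑ a, (∑ j, M k j * N j a) ^ 2
      ≤ ∑ k, (∑ j, (M k j) ^ 2) * (∑ j, ∑ a, (N j a) ^ 2) :=
        Finset.sum_le_sum fun k _ => step k
    _ = _ := by rw [← Finset.sum_mul]

lemma mnorm_mul_le (M : Fin m → Fin n → ℝ) (N : Fin n → Fin l → ℝ) {R : ℝ} (hR : 0 ≤ R)
    (h : (∑ k, ∑ j, (M k j) ^ 2) * (∑ j, ∑ a, (N j a) ^ 2) ≤ R ^ 2) :
    mnorm (fun k a => ∑ j, M k j * N j a) ≤ R := by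
  unfold mnorm
  calc Real.sqrt (∑ k, ∑ a, (∑ j, M k j * N j a) ^ 2)
      ≤ Real.sqrt (R ^ 2) := Real.sqrt_le_sqrt ((frob_mul_le M N).trans h)
    _ = R := Real.sqrt_sq hR

lemma mulvec_sq_le (M : Fin m → Fin n → ℝ) (v : Fin n → ℝ) :
    ∑ k, (∑ j, M k j * v j) ^ 2 ≤ (∑ k, ∑ j, (M k j) ^ 2) * (∑ j, (v j) ^ 2) := by
  calc ∑ k, (∑ j, M k j * v j) ^ 2
      ≤ ∑ k, (∑ j, (M k j) ^ 2) * (∑ j, (v j) ^ 2) :=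
        Finset.sum_le_sum fun k _ => sum_mul_sq_le_sq_mul_sq univ _ _
    _ = _ := by rw [← Finset.sum_mul]

lemma scaled_rows_le (s : Fin m → ℝ) (A : Fin m → Fin n → ℝ) (t : Fin m → ℝ)
    (hs : ∀ k, (s k) ^ 2 ≤ t k) :
    ∑ k, ∑ j, (s k * A k j) ^ 2 ≤ ∑ k, t k * ∑ j, (A k j) ^ 2 := by
  refine Finset.sum_le_sum fun k _ => ?_
  have e : ∑ j, (s k * A k j) ^ 2 = (s k) ^ 2 * ∑ j, (A k j) ^ 2 := by
    rw [Finset.mul_sum]; exact Finset.sum_congr rfl fun j _ => by ring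
  rw [e]
  exact mul_le_mul_of_nonneg_right (hs k) (my_sum_sq_nonneg _)

lemma weighted_le (w r : Fin m → ℝ) (R : ℝ) (hw : ∀ k, 0 ≤ w k)
    (hr : ∀ k, r k ≤ R) :
    ∑ k, w k * r k ≤ (∑ k, w k) * R := by
  calc ∑ k, w k * r k ≤ ∑ k, w k * R :=
        Finset.sum_le_sum fun k _ => mul_le_mul_of_nonneg_left (hr k) (hw k)
    _ = _ := by rw [← Finset.sum_mul]

end MatLemmas

set_option maxHeartbeats 1600000 in
/-- the κ-partial gradient of χ, (∂/∂κ)χ(μ) = Ψ′_λ(ρ_κ(ζ))·∇ρ_κ(ζ),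
is Lipschitz in μ = (κ, λ) with constant √m₂. -/
theorem statement3 {n₁ n₂ n₃ l₁ : ℕ} (ψ : ℝ → ℝ) (c₁ c₂ : ℝ)
    (hψ : Differentiable ℝ ψ) (hψ' : Differentiable ℝ (deriv ψ))
    (hc₁ : ∀ x, |deriv ψ x| ≤ c₁) (hc₂ : ∀ x, |deriv (deriv ψ) x| ≤ c₂)
    (𝒦 : Set (Fin l₁ → ℝ))
    (ρ : (Fin l₁ → ℝ) → (Fin n₁ → ℝ) → Fin n₂ → ℝ)
    (J : (Fin l₁ → ℝ) → Fin n₂ → Fin l₁ → ℝ) (ζ : Fin n₁ → ℝ)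
    (hJ : ∀ κ ∈ 𝒦, HasFDerivAt (fun κ' => ρ κ' ζ)
      (Matrix.mulVecLin (Matrix.of (J κ))).toContinuousLinearMap κ)
    (D L₁ L₂ B₁ B₂ : ℝ)
    (hρLip : ∀ κ ∈ 𝒦, ∀ κ' ∈ 𝒦, vnorm (ρ κ ζ - ρ κ' ζ) ≤ L₁ * vnorm (κ - κ'))
    (hJLip : ∀ κ ∈ 𝒦, ∀ κ' ∈ 𝒦, mnorm (J κ - J κ') ≤ L₂ * vnorm (κ - κ'))
    (hρB : ∀ κ ∈ 𝒦, vnorm (ρ κ ζ) ≤ B₁)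
    (hJB : ∀ κ ∈ 𝒦, mnorm (J κ) ≤ B₂) :
    ∀ κ ∈ 𝒦, ∀ κ' ∈ 𝒦, ∀ (C C' : Fin n₃ → Fin n₂ → ℝ) (d d' : Fin n₃ → ℝ),
      Real.sqrt ((mnorm C) ^ 2 + (vnorm d) ^ 2) < D →
      Real.sqrt ((mnorm C') ^ 2 + (vnorm d') ^ 2) < D →
      mnorm (gradChiKappa ψ ρ J ζ κ C d - gradChiKappa ψ ρ J ζ κ' C' d')
        ≤ Real.sqrt (((n₃ : ℝ) * c₁ * D * L₂ + B₂ * c₂ * D ^ 2 * L₁) ^ 2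
              + B₂ ^ 2 * ((n₃ : ℝ) * c₁ + D * c₂ * Real.sqrt (B₁ ^ 2 + 1)) ^ 2) *
          Real.sqrt ((vnorm (κ - κ')) ^ 2 + (mnorm (C - C')) ^ 2 + (vnorm (d - d')) ^ 2) := by
  intro κ hκ κ' hκ' C C' d d' hCd hCd'
  -- trivial case n₃ = 0
  rcases Nat.eq_zero_or_pos n₃ with h0 | hn₃
  · subst h0
    have hz : mnorm (gradChiKappa ψ ρ J ζ κ C d - gradChiKappa ψ ρ J ζ κ' C' d') = 0 := by
      simp [mnorm]
    rw [hz]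
    positivity
  have hn1 : (1 : ℝ) ≤ (n₃ : ℝ) := by exact_mod_cast hn₃
  -- basic nonnegativity facts
  have hc₁0 : 0 ≤ c₁ := le_trans (abs_nonneg _) (hc₁ 0)
  have hc₂0 : 0 ≤ c₂ := le_trans (abs_nonneg _) (hc₂ 0)
  have hD : (0 : ℝ) < D := lt_of_le_of_lt (Real.sqrt_nonneg _) hCd
  have hB₁ : 0 ≤ B₁ := le_trans (vnorm_nonneg _) (hρB κ' hκ')
  have hB₂ : 0 ≤ B₂ := le_trans (mnorm_nonneg _) (hJB κ' hκ')
  have hL2κ : 0 ≤ L₂ * vnorm (κ - κ') := le_trans (mnorm_nonneg _) (hJLip κ hκ κ' hκ')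
  have hL1κ : 0 ≤ L₁ * vnorm (κ - κ') := le_trans (vnorm_nonneg _) (hρLip κ hκ κ' hκ')
  have hCD : mnorm C ≤ D := by
    have h1 : mnorm C = Real.sqrt ((mnorm C) ^ 2) := (Real.sqrt_sq (mnorm_nonneg C)).symm
    rw [h1]
    exact le_of_lt (lt_of_le_of_lt
      (Real.sqrt_le_sqrt (by nlinarith [sq_nonneg (vnorm d)])) hCd)
  have hCD' : mnorm C' ≤ D := by
    have h1 : mnorm C' = Real.sqrt ((mnorm C') ^ 2) := (Real.sqrt_sq (mnorm_nonneg C')).symm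
    rw [h1]
    exact le_of_lt (lt_of_le_of_lt
      (Real.sqrt_le_sqrt (by nlinarith [sq_nonneg (vnorm d')])) hCd')
  -- Lipschitz property of deriv ψ
  have hlip : ∀ a b : ℝ, |deriv ψ a - deriv ψ b| ≤ c₂ * |a - b| := by
    intro a b
    have h := Convex.norm_image_sub_le_of_norm_deriv_le (f := deriv ψ) (s := Set.univ)
      (fun z _ => hψ' z) (fun z _ => by simpa [Real.norm_eq_abs] using hc₂ z)
      convex_univ (Set.mem_univ b) (Set.mem_univ a)
    simpa [Real.norm_eq_abs] using h
  -- squared-norm facts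
  have SCle : ∑ k, ∑ j, (C k j) ^ 2 ≤ D ^ 2 := by
    have h := pow_le_pow_left₀ (mnorm_nonneg C) hCD 2
    rwa [sq_mnorm] at h
  have SC'le : ∑ k, ∑ j, (C' k j) ^ 2 ≤ D ^ 2 := by
    have h := pow_le_pow_left₀ (mnorm_nonneg C') hCD' 2
    rwa [sq_mnorm] at h
  have SJ'le : ∑ j, ∑ a, (J κ' j a) ^ 2 ≤ B₂ ^ 2 := by
    have h := pow_le_pow_left₀ (mnorm_nonneg (J κ')) (hJB κ' hκ') 2
    rwa [sq_mnorm] at h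
  have SΔJle : ∑ j, ∑ a, (J κ j a - J κ' j a) ^ 2 ≤ (L₂ * vnorm (κ - κ')) ^ 2 := by
    have h := pow_le_pow_left₀ (mnorm_nonneg (J κ - J κ')) (hJLip κ hκ κ' hκ') 2
    rw [sq_mnorm] at h
    simpa only [Pi.sub_apply] using h
  have SΔxle : ∑ j, (ρ κ ζ j - ρ κ' ζ j) ^ 2 ≤ (L₁ * vnorm (κ - κ')) ^ 2 := by
    have h := pow_le_pow_left₀ (vnorm_nonneg (ρ κ ζ - ρ κ' ζ)) (hρLip κ hκ κ' hκ') 2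
    rw [sq_vnorm] at h
    simpa only [Pi.sub_apply] using h
  have Sx'le : ∑ j, (ρ κ' ζ j) ^ 2 ≤ B₁ ^ 2 := by
    have h := pow_le_pow_left₀ (vnorm_nonneg (ρ κ' ζ)) (hρB κ' hκ') 2
    rwa [sq_vnorm] at h
  have SΔCeq : ∑ k, ∑ j, (C k j - C' k j) ^ 2 = (mnorm (C - C')) ^ 2 := by
    rw [sq_mnorm]
    simp only [Pi.sub_apply]
  have SΔdeq : ∑ k, (d k - d' k) ^ 2 = (vnorm (d - d')) ^ 2 := by
    rw [sq_vnorm]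
    simp only [Pi.sub_apply]
  -- abbreviations
  set u : Fin n₃ → ℝ := fun k => ∑ j', C k j' * ρ κ ζ j' + d k with hu
  set v : Fin n₃ → ℝ := fun k => ∑ j', C k j' * ρ κ' ζ j' + d k with hv
  set w : Fin n₃ → ℝ := fun k => ∑ j', C' k j' * ρ κ' ζ j' + d' k with hw
  have huv : ∀ k, u k - v k = ∑ j, C k j * (ρ κ ζ j - ρ κ' ζ j) := by
    intro k
    simp only [hu, hv]
    rw [show (∑ j', C k j' * ρ κ ζ j') + d k - ((∑ j', C k j' * ρ κ' ζ j') + d k)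
        = (∑ j', C k j' * ρ κ ζ j') - (∑ j', C k j' * ρ κ' ζ j') from by ring,
      ← Finset.sum_sub_distrib]
    exact Finset.sum_congr rfl fun j _ => by ring
  have hvw : ∀ k, v k - w k = (∑ j, (C k j - C' k j) * ρ κ' ζ j) + (d k - d' k) := by
    intro k
    simp only [hv, hw]
    rw [show (∑ j', C k j' * ρ κ' ζ j') + d k - ((∑ j', C' k j' * ρ κ' ζ j') + d' k)
        = ((∑ j', C k j' * ρ κ' ζ j') - (∑ j', C' k j' * ρ κ' ζ j')) + (d k - d' k) from by ring,
      ← Finset.sum_sub_distrib]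
    exact congrArg (· + (d k - d' k)) (Finset.sum_congr rfl fun j _ => by ring)
  -- bound on ∑ (v k - w k)^2
  have hev : ∑ k, (v k - w k) ^ 2
      ≤ (B₁ * mnorm (C - C') + vnorm (d - d')) ^ 2 := by
    have hABnn : 0 ≤ B₁ * mnorm (C - C') + vnorm (d - d') :=
      add_nonneg (mul_nonneg hB₁ (mnorm_nonneg _)) (vnorm_nonneg _)
    have e1 : ∑ k, (∑ j, (C k j - C' k j) * ρ κ' ζ j) ^ 2
        ≤ (B₁ * mnorm (C - C')) ^ 2 := by
      calc ∑ k, (∑ j, (C k j - C' k j) * ρ κ' ζ j) ^ 2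
          ≤ (∑ k, ∑ j, (C k j - C' k j) ^ 2) * (∑ j, (ρ κ' ζ j) ^ 2) :=
            mulvec_sq_le _ _
        _ ≤ (mnorm (C - C')) ^ 2 * B₁ ^ 2 := by
            rw [SΔCeq]
            exact mul_le_mul_of_nonneg_left Sx'le (sq_nonneg _)
        _ = (B₁ * mnorm (C - C')) ^ 2 := by ring
    have tri : Real.sqrt (∑ k, (v k - w k) ^ 2)
        ≤ B₁ * mnorm (C - C') + vnorm (d - d') := by
      have e0 : ∑ k, (v k - w k) ^ 2
          = ∑ k, ((∑ j, (C k j - C' k j) * ρ κ' ζ j) + (d k - d' k)) ^ 2 :=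
        Finset.sum_congr rfl fun k _ => by rw [hvw k]
      rw [e0]
      calc Real.sqrt (∑ k, ((∑ j, (C k j - C' k j) * ρ κ' ζ j) + (d k - d' k)) ^ 2)
          ≤ Real.sqrt (∑ k, (∑ j, (C k j - C' k j) * ρ κ' ζ j) ^ 2)
            + Real.sqrt (∑ k, (d k - d' k) ^ 2) := my_sqrt_tri _ _
        _ ≤ B₁ * mnorm (C - C') + vnorm (d - d') := by
            have p1 : Real.sqrt (∑ k, (∑ j, (C k j - C' k j) * ρ κ' ζ j) ^ 2)
                ≤ B₁ * mnorm (C - C') := by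
              calc Real.sqrt (∑ k, (∑ j, (C k j - C' k j) * ρ κ' ζ j) ^ 2)
                  ≤ Real.sqrt ((B₁ * mnorm (C - C')) ^ 2) := Real.sqrt_le_sqrt e1
                _ = B₁ * mnorm (C - C') :=
                    Real.sqrt_sq (mul_nonneg hB₁ (mnorm_nonneg _))
            have p2 : Real.sqrt (∑ k, (d k - d' k) ^ 2) = vnorm (d - d') := by
              rw [vnorm]
              simp only [Pi.sub_apply]
            linarith [p1, le_of_eq p2]
    have := pow_le_pow_left₀ (Real.sqrt_nonneg _) tri 2
    rwa [Real.sq_sqrt (my_sum_sq_nonneg _)] at this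
  -- the four pieces
  set T1f : Fin n₃ → Fin l₁ → ℝ :=
    fun k a => ∑ j, (deriv ψ (u k) * C k j) * (J κ j a - J κ' j a) with hT1f
  set T2f : Fin n₃ → Fin l₁ → ℝ :=
    fun k a => ∑ j, ((deriv ψ (u k) - deriv ψ (v k)) * C k j) * J κ' j a with hT2f
  set T3f : Fin n₃ → Fin l₁ → ℝ :=
    fun k a => ∑ j, (deriv ψ (v k) * (C k j - C' k j)) * J κ' j a with hT3f
  set T4f : Fin n₃ → Fin l₁ → ℝ :=
    fun k a => ∑ j, ((deriv ψ (v k) - deriv ψ (w k)) * C' k j) * J κ' j a with hT4f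
  have hdec : gradChiKappa ψ ρ J ζ κ C d - gradChiKappa ψ ρ J ζ κ' C' d'
      = fun k a => T1f k a + (T2f k a + (T3f k a + T4f k a)) := by
    funext k a
    simp only [Pi.sub_apply, gradChiKappa, hT1f, hT2f, hT3f, hT4f, hu, hv, hw]
    rw [← Finset.sum_add_distrib, ← Finset.sum_add_distrib, ← Finset.sum_add_distrib,
      ← Finset.sum_sub_distrib]
    exact Finset.sum_congr rfl fun j _ => by ring
  -- nonneg of second factors
  have SJ'nn : 0 ≤ ∑ j, ∑ a, (J κ' j a) ^ 2 :=
    Finset.sum_nonneg fun _ _ => my_sum_sq_nonneg _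
  have SΔJnn : 0 ≤ ∑ j, ∑ a, (J κ j a - J κ' j a) ^ 2 :=
    Finset.sum_nonneg fun _ _ => my_sum_sq_nonneg _
  -- bound 1
  have h1 : mnorm T1f ≤ (c₁ * D) * (L₂ * vnorm (κ - κ')) := by
    rw [hT1f]
    refine mnorm_mul_le _ _ (mul_nonneg (mul_nonneg hc₁0 hD.le) hL2κ) ?_
    have F1 : ∑ k, ∑ j, (deriv ψ (u k) * C k j) ^ 2 ≤ c₁ ^ 2 * D ^ 2 := by
      calc ∑ k, ∑ j, (deriv ψ (u k) * C k j) ^ 2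
          ≤ ∑ k, c₁ ^ 2 * ∑ j, (C k j) ^ 2 :=
            scaled_rows_le _ _ _ fun k => my_sq_le_of_abs (hc₁ _)
        _ = c₁ ^ 2 * ∑ k, ∑ j, (C k j) ^ 2 := by rw [← Finset.mul_sum]
        _ ≤ c₁ ^ 2 * D ^ 2 := mul_le_mul_of_nonneg_left SCle (sq_nonneg _)
    calc (∑ k, ∑ j, (deriv ψ (u k) * C k j) ^ 2) * (∑ j, ∑ a, (J κ j a - J κ' j a) ^ 2)
        ≤ (c₁ ^ 2 * D ^ 2) * (L₂ * vnorm (κ - κ')) ^ 2 :=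
          mul_le_mul F1 SΔJle SΔJnn (by positivity)
      _ = ((c₁ * D) * (L₂ * vnorm (κ - κ'))) ^ 2 := by ring
  -- bound 2
  have h2 : mnorm T2f ≤ (c₂ * D ^ 2 * B₂) * (L₁ * vnorm (κ - κ')) := by
    rw [hT2f]
    refine mnorm_mul_le _ _
      (mul_nonneg (mul_nonneg (mul_nonneg hc₂0 (sq_nonneg D)) hB₂) hL1κ) ?_
    have hs2 : ∀ k, (deriv ψ (u k) - deriv ψ (v k)) ^ 2
        ≤ c₂ ^ 2 * (∑ j, C k j * (ρ κ ζ j - ρ κ' ζ j)) ^ 2 := by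
      intro k
      have h := my_sq_le_of_abs (hlip (u k) (v k))
      rw [mul_pow, sq_abs] at h
      calc (deriv ψ (u k) - deriv ψ (v k)) ^ 2 ≤ c₂ ^ 2 * (u k - v k) ^ 2 := h
        _ = _ := by rw [huv k]
    have hmv : ∑ k, (∑ j, C k j * (ρ κ ζ j - ρ κ' ζ j)) ^ 2
        ≤ D ^ 2 * (L₁ * vnorm (κ - κ')) ^ 2 := by
      calc ∑ k, (∑ j, C k j * (ρ κ ζ j - ρ κ' ζ j)) ^ 2
          ≤ (∑ k, ∑ j, (C k j) ^ 2) * (∑ j, (ρ κ ζ j - ρ κ' ζ j) ^ 2) :=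
            mulvec_sq_le _ _
        _ ≤ D ^ 2 * (L₁ * vnorm (κ - κ')) ^ 2 :=
            mul_le_mul SCle SΔxle (my_sum_sq_nonneg _) (by positivity)
    have F1 : ∑ k, ∑ j, ((deriv ψ (u k) - deriv ψ (v k)) * C k j) ^ 2
        ≤ c₂ ^ 2 * (D ^ 2 * (L₁ * vnorm (κ - κ')) ^ 2) * D ^ 2 := by
      calc ∑ k, ∑ j, ((deriv ψ (u k) - deriv ψ (v k)) * C k j) ^ 2
          ≤ ∑ k, (c₂ ^ 2 * (∑ j, C k j * (ρ κ ζ j - ρ κ' ζ j)) ^ 2) * ∑ j, (C k j) ^ 2 :=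
            scaled_rows_le _ _ _ hs2
        _ ≤ (∑ k, c₂ ^ 2 * (∑ j, C k j * (ρ κ ζ j - ρ κ' ζ j)) ^ 2) * D ^ 2 :=
            weighted_le _ _ _ (fun k => by positivity) (fun k =>
              le_trans (Finset.single_le_sum (f := fun k => ∑ j, (C k j) ^ 2)
                (fun k _ => my_sum_sq_nonneg _) (Finset.mem_univ k)) SCle)
        _ = (c₂ ^ 2 * ∑ k, (∑ j, C k j * (ρ κ ζ j - ρ κ' ζ j)) ^ 2) * D ^ 2 := by
            rw [← Finset.mul_sum]
        _ ≤ c₂ ^ 2 * (D ^ 2 * (L₁ * vnorm (κ - κ')) ^ 2) * D ^ 2 :=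
            mul_le_mul_of_nonneg_right
              (mul_le_mul_of_nonneg_left hmv (sq_nonneg c₂)) (sq_nonneg D)
    calc (∑ k, ∑ j, ((deriv ψ (u k) - deriv ψ (v k)) * C k j) ^ 2)
          * (∑ j, ∑ a, (J κ' j a) ^ 2)
        ≤ (c₂ ^ 2 * (D ^ 2 * (L₁ * vnorm (κ - κ')) ^ 2) * D ^ 2) * B₂ ^ 2 :=
          mul_le_mul F1 SJ'le SJ'nn (by positivity)
      _ = ((c₂ * D ^ 2 * B₂) * (L₁ * vnorm (κ - κ'))) ^ 2 := by ring
  -- bound 3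
  have h3 : mnorm T3f ≤ (c₁ * B₂) * mnorm (C - C') := by
    rw [hT3f]
    refine mnorm_mul_le _ _
      (mul_nonneg (mul_nonneg hc₁0 hB₂) (mnorm_nonneg _)) ?_
    have F1 : ∑ k, ∑ j, (deriv ψ (v k) * (C k j - C' k j)) ^ 2
        ≤ c₁ ^ 2 * (mnorm (C - C')) ^ 2 := by
      calc ∑ k, ∑ j, (deriv ψ (v k) * (C k j - C' k j)) ^ 2
          ≤ ∑ k, c₁ ^ 2 * ∑ j, (C k j - C' k j) ^ 2 :=
            scaled_rows_le _ _ _ fun k => my_sq_le_of_abs (hc₁ _)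
        _ = c₁ ^ 2 * ∑ k, ∑ j, (C k j - C' k j) ^ 2 := by rw [← Finset.mul_sum]
        _ = c₁ ^ 2 * (mnorm (C - C')) ^ 2 := by rw [SΔCeq]
    calc (∑ k, ∑ j, (deriv ψ (v k) * (C k j - C' k j)) ^ 2) * (∑ j, ∑ a, (J κ' j a) ^ 2)
        ≤ (c₁ ^ 2 * (mnorm (C - C')) ^ 2) * B₂ ^ 2 :=
          mul_le_mul F1 SJ'le SJ'nn (by positivity)
      _ = ((c₁ * B₂) * mnorm (C - C')) ^ 2 := by ring
  -- bound 4
  have h4 : mnorm T4f ≤ (c₂ * D * B₂) * (B₁ * mnorm (C - C') + vnorm (d - d')) := by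
    rw [hT4f]
    refine mnorm_mul_le _ _
      (mul_nonneg (mul_nonneg (mul_nonneg hc₂0 hD.le) hB₂)
        (add_nonneg (mul_nonneg hB₁ (mnorm_nonneg _)) (vnorm_nonneg _))) ?_
    have hs4 : ∀ k, (deriv ψ (v k) - deriv ψ (w k)) ^ 2 ≤ c₂ ^ 2 * (v k - w k) ^ 2 := by
      intro k
      have h := my_sq_le_of_abs (hlip (v k) (w k))
      rwa [mul_pow, sq_abs] at h
    have F1 : ∑ k, ∑ j, ((deriv ψ (v k) - deriv ψ (w k)) * C' k j) ^ 2
        ≤ c₂ ^ 2 * (B₁ * mnorm (C - C') + vnorm (d - d')) ^ 2 * D ^ 2 := by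
      calc ∑ k, ∑ j, ((deriv ψ (v k) - deriv ψ (w k)) * C' k j) ^ 2
          ≤ ∑ k, (c₂ ^ 2 * (v k - w k) ^ 2) * ∑ j, (C' k j) ^ 2 :=
            scaled_rows_le _ _ _ hs4
        _ ≤ (∑ k, c₂ ^ 2 * (v k - w k) ^ 2) * D ^ 2 :=
            weighted_le _ _ _ (fun k => by positivity) (fun k =>
              le_trans (Finset.single_le_sum (f := fun k => ∑ j, (C' k j) ^ 2)
                (fun k _ => my_sum_sq_nonneg _) (Finset.mem_univ k)) SC'le)
        _ = (c₂ ^ 2 * ∑ k, (v k - w k) ^ 2) * D ^ 2 := by rw [← Finset.mul_sum]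
        _ ≤ c₂ ^ 2 * (B₁ * mnorm (C - C') + vnorm (d - d')) ^ 2 * D ^ 2 :=
            mul_le_mul_of_nonneg_right
              (mul_le_mul_of_nonneg_left hev (sq_nonneg c₂)) (sq_nonneg D)
    calc (∑ k, ∑ j, ((deriv ψ (v k) - deriv ψ (w k)) * C' k j) ^ 2)
          * (∑ j, ∑ a, (J κ' j a) ^ 2)
        ≤ (c₂ ^ 2 * (B₁ * mnorm (C - C') + vnorm (d - d')) ^ 2 * D ^ 2) * B₂ ^ 2 :=
          mul_le_mul F1 SJ'le SJ'nn (by positivity)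
      _ = ((c₂ * D * B₂) * (B₁ * mnorm (C - C') + vnorm (d - d'))) ^ 2 := by ring
  -- assemble
  have hDknn : 0 ≤ vnorm (κ - κ') := vnorm_nonneg _
  have hDCnn : 0 ≤ mnorm (C - C') := mnorm_nonneg _
  have hDdnn : 0 ≤ vnorm (d - d') := vnorm_nonneg _
  have hDlnn : 0 ≤ Real.sqrt ((mnorm (C - C')) ^ 2 + (vnorm (d - d')) ^ 2) :=
    Real.sqrt_nonneg _
  have hDCl : mnorm (C - C') ≤ Real.sqrt ((mnorm (C - C')) ^ 2 + (vnorm (d - d')) ^ 2) :=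
    calc mnorm (C - C') = Real.sqrt (mnorm (C - C') ^ 2) := (Real.sqrt_sq hDCnn).symm
      _ ≤ Real.sqrt (mnorm (C - C') ^ 2 + vnorm (d - d') ^ 2) :=
        Real.sqrt_le_sqrt (by nlinarith [sq_nonneg (vnorm (d - d'))])
  have comp1 : (c₁ * D) * (L₂ * vnorm (κ - κ')) ≤ ((n₃ : ℝ) * c₁ * D * L₂) * vnorm (κ - κ') := by
    have hx : 0 ≤ c₁ * D * (L₂ * vnorm (κ - κ')) := mul_nonneg (mul_nonneg hc₁0 hD.le) hL2κ
    nlinarith [hx, hn1]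
  have comp2 : (c₂ * D ^ 2 * B₂) * (L₁ * vnorm (κ - κ')) = (B₂ * c₂ * D ^ 2 * L₁) * vnorm (κ - κ') := by ring
  have comp3 : (c₁ * B₂) * mnorm (C - C') ≤ ((n₃ : ℝ) * c₁ * B₂) * Real.sqrt ((mnorm (C - C')) ^ 2 + (vnorm (d - d')) ^ 2) := by
    have h1 : (c₁ * B₂) * mnorm (C - C') ≤ (c₁ * B₂) * Real.sqrt ((mnorm (C - C')) ^ 2 + (vnorm (d - d')) ^ 2) :=
      mul_le_mul_of_nonneg_left hDCl (mul_nonneg hc₁0 hB₂)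
    nlinarith [h1, hn1, mul_nonneg (mul_nonneg hc₁0 hB₂) hDlnn]
  have comp4 : (c₂ * D * B₂) * (B₁ * mnorm (C - C') + vnorm (d - d'))
      ≤ (c₂ * D * B₂ * Real.sqrt (B₁ ^ 2 + 1)) * Real.sqrt ((mnorm (C - C')) ^ 2 + (vnorm (d - d')) ^ 2) := by
    have h2cs := my_two_cs B₁ 1 (mnorm (C - C')) (vnorm (d - d'))
    rw [one_pow, one_mul] at h2cs
    calc (c₂ * D * B₂) * (B₁ * mnorm (C - C') + vnorm (d - d'))
        ≤ (c₂ * D * B₂) * (Real.sqrt (B₁ ^ 2 + 1) * Real.sqrt ((mnorm (C - C')) ^ 2 + (vnorm (d - d')) ^ 2)) := by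
          refine mul_le_mul_of_nonneg_left ?_
            (mul_nonneg (mul_nonneg hc₂0 hD.le) hB₂)
          exact h2cs
      _ = _ := by ring
  have stepA : (c₁ * D) * (L₂ * vnorm (κ - κ')) + ((c₂ * D ^ 2 * B₂) * (L₁ * vnorm (κ - κ'))
        + ((c₁ * B₂) * mnorm (C - C') + (c₂ * D * B₂) * (B₁ * mnorm (C - C') + vnorm (d - d'))))
      ≤ ((n₃ : ℝ) * c₁ * D * L₂ + B₂ * c₂ * D ^ 2 * L₁) * vnorm (κ - κ')
        + (B₂ * ((n₃ : ℝ) * c₁ + D * c₂ * Real.sqrt (B₁ ^ 2 + 1))) * Real.sqrt ((mnorm (C - C')) ^ 2 + (vnorm (d - d')) ^ 2) := by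
    have e : ((n₃ : ℝ) * c₁ * D * L₂ + B₂ * c₂ * D ^ 2 * L₁) * vnorm (κ - κ')
        + (B₂ * ((n₃ : ℝ) * c₁ + D * c₂ * Real.sqrt (B₁ ^ 2 + 1))) * Real.sqrt ((mnorm (C - C')) ^ 2 + (vnorm (d - d')) ^ 2)
        = ((n₃ : ℝ) * c₁ * D * L₂) * vnorm (κ - κ') + ((B₂ * c₂ * D ^ 2 * L₁) * vnorm (κ - κ')
          + (((n₃ : ℝ) * c₁ * B₂) * Real.sqrt ((mnorm (C - C')) ^ 2 + (vnorm (d - d')) ^ 2)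
            + (c₂ * D * B₂ * Real.sqrt (B₁ ^ 2 + 1)) * Real.sqrt ((mnorm (C - C')) ^ 2 + (vnorm (d - d')) ^ 2))) := by ring
    rw [e]
    linarith [comp1, le_of_eq comp2, comp3, comp4]
  rw [hdec]
  calc mnorm (fun k a => T1f k a + (T2f k a + (T3f k a + T4f k a)))
      ≤ mnorm T1f + mnorm (fun k a => T2f k a + (T3f k a + T4f k a)) :=
        mnorm_add_le _ _
    _ ≤ mnorm T1f + (mnorm T2f + mnorm (fun k a => T3f k a + T4f k a)) :=
        add_le_add_right (mnorm_add_le _ _) _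
    _ ≤ mnorm T1f + (mnorm T2f + (mnorm T3f + mnorm T4f)) :=
        add_le_add_right (add_le_add_right (mnorm_add_le _ _) _) _
    _ ≤ (c₁ * D) * (L₂ * vnorm (κ - κ')) + ((c₂ * D ^ 2 * B₂) * (L₁ * vnorm (κ - κ'))
          + ((c₁ * B₂) * mnorm (C - C') + (c₂ * D * B₂) * (B₁ * mnorm (C - C') + vnorm (d - d')))) :=
        add_le_add h1 (add_le_add h2 (add_le_add h3 h4))
    _ ≤ ((n₃ : ℝ) * c₁ * D * L₂ + B₂ * c₂ * D ^ 2 * L₁) * vnorm (κ - κ')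
          + (B₂ * ((n₃ : ℝ) * c₁ + D * c₂ * Real.sqrt (B₁ ^ 2 + 1))) * Real.sqrt ((mnorm (C - C')) ^ 2 + (vnorm (d - d')) ^ 2) := stepA
    _ ≤ Real.sqrt (((n₃ : ℝ) * c₁ * D * L₂ + B₂ * c₂ * D ^ 2 * L₁) ^ 2
            + (B₂ * ((n₃ : ℝ) * c₁ + D * c₂ * Real.sqrt (B₁ ^ 2 + 1))) ^ 2)
          * Real.sqrt (vnorm (κ - κ') ^ 2 + Real.sqrt ((mnorm (C - C')) ^ 2 + (vnorm (d - d')) ^ 2) ^ 2) := my_two_cs _ _ _ _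
    _ = Real.sqrt (((n₃ : ℝ) * c₁ * D * L₂ + B₂ * c₂ * D ^ 2 * L₁) ^ 2
            + B₂ ^ 2 * ((n₃ : ℝ) * c₁ + D * c₂ * Real.sqrt (B₁ ^ 2 + 1)) ^ 2)
          * Real.sqrt (vnorm (κ - κ') ^ 2 + mnorm (C - C') ^ 2 + vnorm (d - d') ^ 2) := by
        rw [mul_pow,
          Real.sq_sqrt (show (0 : ℝ) ≤ mnorm (C - C') ^ 2 + vnorm (d - d') ^ 2 by positivity),
          ← add_assoc]
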